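/- arXiv:1511.04223 — 2 statements merged into one kernel-verified Lean document; each statement's English description precedes it below -/
import Mathlib

section
/- The function f(τ) = 2 − τ·sin(τ) − 2·cos(τ) is non-negative on [0, π]. -/
/-- The function `f(τ) = 2 − τ·sin τ − 2·cos τ` is non-negative on `[0, π]`. -/
theorem stmt_1 (τ : ℝ) (hτ : τ ∈ Set.Icc 0 Real.pi) :
    0 ≤ 2 - τ * Real.sin τ - 2 * Real.cos τ := by
  obtain ⟨h0, h1⟩ := hτ
  set x := τ / 2 with hx
  have hx0 : 0 ≤ x := by positivity
  have hx2 : x ≤ Real.pi / 2 := by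
    rw [hx]; linarith
  have hsin : 0 ≤ Real.sin x :=
    Real.sin_nonneg_of_nonneg_of_le_pi hx0 (by linarith [Real.pi_pos])
  have key : τ * Real.cos x ≤ 2 * Real.sin x := by
    rcases eq_or_lt_of_le hx0 with h | h
    · have : τ = 0 := by simpa [hx] using h.symm
      simp [this, hsin]
    rcases eq_or_lt_of_le hx2 with h2 | h2
    · rw [h2, Real.cos_pi_div_two]
      simp [hsin]
    · have hc : 0 < Real.cos x := Real.cos_pos_of_mem_Ioo ⟨by linarith, h2⟩
      have ht := Real.lt_tan h h2
      rw [Real.tan_eq_sin_div_cos] at ht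
      have : x * Real.cos x < Real.sin x := (lt_div_iff₀ hc).mp ht
      rw [hx] at this ⊢
      nlinarith
  have h2x : τ = 2 * x := by rw [hx]; ring
  have hcos : Real.cos τ = 2 * Real.cos x ^ 2 - 1 := by
    rw [h2x, Real.cos_two_mul]
  have hsinτ : Real.sin τ = 2 * Real.sin x * Real.cos x := by
    rw [h2x, Real.sin_two_mul]
  rw [hcos, hsinτ]
  nlinarith [mul_nonneg hsin (sub_nonneg.2 key), Real.sin_sq_add_cos_sq x]
end

section
/- Let f : [a−β, a] → ℝ be continuous, non-negative, and non-decreasing. Then sup_{τ ∈ [a−β, a]} (∫_{a−β}^{τ} f(s) ds)·(∫_{τ}^{a} 1/f(s) ds) ≤ β²/4, provided f > 0 on (a−β, a]. -/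
/-- Let `f : [a−β, a] → ℝ` be continuous, non-negative, non-decreasing, and positive
on `(a−β, a]`. Then for every `τ ∈ [a−β, a]`,
`(∫_{a−β}^{τ} f) · (∫_{τ}^{a} 1/f) ≤ β²/4` (so the supremum over `τ` is `≤ β²/4`). -/
theorem stmt_9 (a β : ℝ) (hβ : 0 < β) (f : ℝ → ℝ)
    (hcont : ContinuousOn f (Set.Icc (a - β) a))
    (hnonneg : ∀ s ∈ Set.Icc (a - β) a, 0 ≤ f s)
    (hmono : MonotoneOn f (Set.Icc (a - β) a))
    (hpos : ∀ s ∈ Set.Ioc (a - β) a, 0 < f s) :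
    ∀ τ ∈ Set.Icc (a - β) a,
      (∫ s in (a - β)..τ, f s) * (∫ s in τ..a, 1 / f s) ≤ β ^ 2 / 4 := by
  intro τ hτ
  obtain ⟨hτ1, hτ2⟩ := hτ
  rcases eq_or_lt_of_le hτ1 with heq | hlt
  · rw [← heq, intervalIntegral.integral_same, zero_mul]
    positivity
  · have hfτ : 0 < f τ := hpos τ ⟨hlt, hτ2⟩
    have hsub1 : Set.Icc (a - β) τ ⊆ Set.Icc (a - β) a := Set.Icc_subset_Icc le_rfl hτ2
    have hsub2 : Set.Icc τ a ⊆ Set.Icc (a - β) a := Set.Icc_subset_Icc hτ1 le_rfl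
    have hint1 : IntervalIntegrable f MeasureTheory.volume (a - β) τ := by
      exact (hcont.mono hsub1).intervalIntegrable_of_Icc hτ1
    have hfpos2 : ∀ s ∈ Set.Icc τ a, 0 < f s := fun s hs =>
      hpos s ⟨lt_of_lt_of_le hlt hs.1, hs.2⟩
    have hcont2 : ContinuousOn (fun s => 1 / f s) (Set.Icc τ a) := by
      apply ContinuousOn.div continuousOn_const (hcont.mono hsub2)
      intro s hs; exact (hfpos2 s hs).ne'
    have hint2 : IntervalIntegrable (fun s => 1 / f s) MeasureTheory.volume τ a := by
      exact hcont2.intervalIntegrable_of_Icc hτ2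
    have hI1nn : 0 ≤ ∫ s in (a - β)..τ, f s :=
      intervalIntegral.integral_nonneg hτ1 (fun s hs => hnonneg s (hsub1 hs))
    have hI2nn : 0 ≤ ∫ s in τ..a, 1 / f s :=
      intervalIntegral.integral_nonneg hτ2 (fun s hs => le_of_lt (by
        have := hfpos2 s hs; positivity))
    have hI1 : (∫ s in (a - β)..τ, f s) ≤ (τ - (a - β)) * f τ := by
      have := intervalIntegral.integral_mono_on hτ1 hint1
        (intervalIntegrable_const (c := f τ))
        (fun s hs => hmono (hsub1 hs) ⟨hτ1, hτ2⟩ hs.2)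
      simpa [smul_eq_mul] using this
    have hI2 : (∫ s in τ..a, 1 / f s) ≤ (a - τ) * (1 / f τ) := by
      have := intervalIntegral.integral_mono_on hτ2 hint2
        (intervalIntegrable_const (c := 1 / f τ))
        (fun s hs => one_div_le_one_div_of_le hfτ (hmono ⟨hτ1, hτ2⟩ (hsub2 hs) hs.1))
      simpa [smul_eq_mul] using this
    calc (∫ s in (a - β)..τ, f s) * (∫ s in τ..a, 1 / f s)
        ≤ ((τ - (a - β)) * f τ) * ((a - τ) * (1 / f τ)) :=
          mul_le_mul hI1 hI2 hI2nn (by nlinarith)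
      _ = (τ - (a - β)) * (a - τ) := by field_simp
      _ ≤ β ^ 2 / 4 := by nlinarith [sq_nonneg (2 * τ - 2 * a + β)]
end
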